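/- Let M1 ∈ R^(p×q), M2 ∈ R^(q×q) with M2 symmetric positive semidefinite, and suppose there exists Λ such that the block matrix [[Λ, M1],[M1^T, M2]] is positive semidefinite. Then the set C = {Λ symmetric : [[Λ, M1],[M1^T, M2]] ⪰ 0} has a minimum element with respect to the Loewner order, namely Λ̄ = M1 M2^+ M1^T, where M2^+ is the Moore–Penrose pseudoinverse: Λ̄ ∈ C, and for every Λ ∈ C, Λ − Λ̄ ⪰ 0. -/

import Mathlib

open Matrix

/-- Uniqueness of the Moore–Penrose pseudoinverse. -/
lemma pinv_unique' {q : ℕ} (A X Y : Matrix (Fin q) (Fin q) ℝ)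
    (hX1 : A * X * A = A) (hX2 : X * A * X = X)
    (hX3 : (A * X)ᵀ = A * X) (hX4 : (X * A)ᵀ = X * A)
    (hY1 : A * Y * A = A) (_hY2 : Y * A * Y = Y)
    (hY3 : (A * Y)ᵀ = A * Y) (hY4 : (Y * A)ᵀ = Y * A) : X = Y := by
  have hAX : A * X = A * Y := by
    calc A * X = (A * Y * A) * X := by rw [hY1]
    _ = (A * Y) * (A * X) := by simp only [mul_assoc]
    _ = (A * Y)ᵀ * (A * X)ᵀ := by rw [hY3, hX3]
    _ = ((A * X) * (A * Y))ᵀ := (transpose_mul _ _).symm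
    _ = ((A * X * A) * Y)ᵀ := by simp only [mul_assoc]
    _ = (A * Y)ᵀ := by rw [hX1]
    _ = A * Y := hY3
  have hXA : X * A = Y * A := by
    calc X * A = X * (A * Y * A) := by rw [hY1]
    _ = (X * A) * (Y * A) := by simp only [mul_assoc]
    _ = (X * A)ᵀ * (Y * A)ᵀ := by rw [hX4, hY4]
    _ = ((Y * A) * (X * A))ᵀ := (transpose_mul _ _).symm
    _ = (Y * (A * X * A))ᵀ := by simp only [mul_assoc]
    _ = (Y * A)ᵀ := by rw [hX1]
    _ = Y * A := hY4
  calc X = X * A * X := hX2.symm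
  _ = X * (A * Y) := by rw [mul_assoc, hAX]
  _ = (X * A) * Y := by rw [mul_assoc]
  _ = (Y * A) * Y := by rw [hXA]
  _ = Y := _hY2

/-- If some `Λ` makes `[[Λ,M1],[M1ᵀ,M2]]` PSD (with `M2 ⪰ 0` symmetric), then
`Λ̄ = M1 M2⁺ M1ᵀ` is the minimum element (in the Loewner order) of the set of symmetric `Λ`
making the block matrix PSD. `M2p` is the Moore–Penrose pseudoinverse of `M2`, characterized
by the four Penrose conditions. -/
theorem stmt4 {p q : ℕ} (M1 : Matrix (Fin p) (Fin q) ℝ) (M2 : Matrix (Fin q) (Fin q) ℝ)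
    (hM2 : M2.PosSemidef)
    (M2p : Matrix (Fin q) (Fin q) ℝ)
    (hp1 : M2 * M2p * M2 = M2) (hp2 : M2p * M2 * M2p = M2p)
    (hp3 : (M2 * M2p)ᵀ = M2 * M2p) (hp4 : (M2p * M2)ᵀ = M2p * M2)
    (hex : ∃ Λ : Matrix (Fin p) (Fin p) ℝ, (fromBlocks Λ M1 M1ᵀ M2).PosSemidef) :
    (fromBlocks (M1 * M2p * M1ᵀ) M1 M1ᵀ M2).PosSemidef ∧
    ∀ Λ : Matrix (Fin p) (Fin p) ℝ, Λ.IsSymm → (fromBlocks Λ M1 M1ᵀ M2).PosSemidef →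
      (Λ - M1 * M2p * M1ᵀ).PosSemidef := by
  have hM2s : M2ᵀ = M2 := by
    have := hM2.isHermitian
    rwa [Matrix.IsHermitian, conjTranspose_eq_transpose_of_trivial] at this
  -- M2p is symmetric
  have hsym : M2pᵀ = M2p := by
    refine pinv_unique' M2 M2pᵀ M2p ?_ ?_ ?_ ?_ hp1 hp2 hp3 hp4
    · have h := congrArg Matrix.transpose hp1
      simp only [transpose_mul, hM2s] at h
      rw [← mul_assoc] at h; exact h
    · have h := congrArg Matrix.transpose hp2
      simp only [transpose_mul, hM2s] at h
      rw [← mul_assoc] at h; exact h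
    · have h1 : M2 * M2pᵀ = M2p * M2 := by
        calc M2 * M2pᵀ = (M2p * M2ᵀ)ᵀ := by rw [transpose_mul, transpose_transpose]
        _ = (M2p * M2)ᵀ := by rw [hM2s]
        _ = M2p * M2 := hp4
      rw [h1, hp4]
    · have h1 : M2pᵀ * M2 = M2 * M2p := by
        calc M2pᵀ * M2 = (M2ᵀ * M2p)ᵀ := by rw [transpose_mul, transpose_transpose]
        _ = (M2 * M2p)ᵀ := by rw [hM2s]
        _ = M2 * M2p := hp3
      rw [h1, hp3]
  -- key fact: M1 * M2p * M2 = M1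
  obtain ⟨Λ₀, hP₀⟩ := hex
  have hkey : M1 * M2p * M2 = M1 := by
    set N : Matrix (Fin q) (Fin q) ℝ := 1 - M2p * M2 with hN
    have hM2N : M2 * N = 0 := by
      rw [hN, Matrix.mul_sub, Matrix.mul_one, ← mul_assoc, hp1, sub_self]
    set C : Matrix (Fin p ⊕ Fin q) (Fin q) ℝ :=
      fromRows (0 : Matrix (Fin p) (Fin q) ℝ) N with hC
    have hPC : (fromBlocks Λ₀ M1 M1ᵀ M2) * C = fromRows (M1 * N) 0 := by
      rw [hC, fromBlocks_mul_fromRows, hM2N]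
      simp
    open scoped MatrixOrder in
    obtain ⟨B, hB⟩ := CStarAlgebra.nonneg_iff_eq_star_mul_self.mp hP₀.nonneg
    have hBC : B * C = 0 := by
      rw [← Matrix.conjTranspose_mul_self_eq_zero]
      have : Cᴴ * ((fromBlocks Λ₀ M1 M1ᵀ M2) * C) = 0 := by
        rw [hPC, hC, conjTranspose_eq_transpose_of_trivial, transpose_fromRows,
          fromCols_mul_fromRows]
        simp
      rw [hB] at this
      rw [conjTranspose_mul]
      simp only [Matrix.mul_assoc] at this ⊢
      exact this
    have h0 : fromRows (M1 * N) (0 : Matrix (Fin q) (Fin q) ℝ) = 0 := by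
      rw [← hPC, hB, Matrix.mul_assoc, hBC, Matrix.mul_zero]
    have hMN : M1 * N = 0 := by
      have := (fromRows_ext_iff (M1 * N) (0 : Matrix (Fin q) (Fin q) ℝ) 0 0).mp
        (by rw [h0, fromRows_zero])
      exact this.1
    rw [hN, Matrix.mul_sub, Matrix.mul_one, sub_eq_zero] at hMN
    rw [Matrix.mul_assoc]; exact hMN.symm
  have h5 : M2 * M2p * M1ᵀ = M1ᵀ := by
    have h := congrArg Matrix.transpose hkey
    simp only [transpose_mul, hM2s, hsym] at h
    rw [Matrix.mul_assoc]; exact h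
  have hbar : (fromBlocks (M1 * M2p * M1ᵀ) M1 M1ᵀ M2).PosSemidef := by
    have hps := hM2.conjTranspose_mul_mul_same
      (fromCols (M2p * M1ᵀ) (1 : Matrix (Fin q) (Fin q) ℝ))
    have hEq : (fromCols (M2p * M1ᵀ) (1 : Matrix (Fin q) (Fin q) ℝ))ᴴ * M2 *
        (fromCols (M2p * M1ᵀ) (1 : Matrix (Fin q) (Fin q) ℝ)) = fromBlocks (M1 * M2p * M1ᵀ) M1 M1ᵀ M2 := by
      rw [conjTranspose_eq_transpose_of_trivial, transpose_fromCols, transpose_mul,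
        transpose_one, transpose_transpose, hsym, fromRows_mul, fromRows_mul_fromCols]
      simp only [Matrix.mul_one, Matrix.one_mul]
      rw [hkey, ← Matrix.mul_assoc M1 M2p M1ᵀ, ← Matrix.mul_assoc M2 M2p M1ᵀ, h5]
    rw [hEq] at hps; exact hps
  refine ⟨hbar, fun Λ _ hP => ?_⟩
  have hps := hP.conjTranspose_mul_mul_same
    (fromRows (1 : Matrix (Fin p) (Fin p) ℝ) (-(M2p * M1ᵀ)))
  have hEq : (fromRows (1 : Matrix (Fin p) (Fin p) ℝ) (-(M2p * M1ᵀ)))ᴴ *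
      (fromBlocks Λ M1 M1ᵀ M2) * (fromRows (1 : Matrix (Fin p) (Fin p) ℝ) (-(M2p * M1ᵀ))) = Λ - M1 * M2p * M1ᵀ := by
    rw [Matrix.mul_assoc, fromBlocks_mul_fromRows, conjTranspose_eq_transpose_of_trivial,
      transpose_fromRows, transpose_one, transpose_neg, transpose_mul, transpose_transpose,
      hsym, fromCols_mul_fromRows]
    have e1 : Λ * 1 + M1 * -(M2p * M1ᵀ) = Λ - M1 * M2p * M1ᵀ := by
      rw [Matrix.mul_one, Matrix.mul_neg, ← Matrix.mul_assoc, ← sub_eq_add_neg]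
    have e2 : M1ᵀ * (1 : Matrix (Fin p) (Fin p) ℝ) + M2 * -(M2p * M1ᵀ) = 0 := by
      rw [Matrix.mul_one, Matrix.mul_neg, ← Matrix.mul_assoc, h5, add_neg_cancel]
    rw [e1, e2, Matrix.mul_zero, Matrix.one_mul, add_zero]
  rw [hEq] at hps; exact hps
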